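/- Let G be an n-resource/k-player-type resource selection game with I.D.-dependent weighting (with nondecreasing cost functions, not necessarily continuous). For every resource j ∈ {1,…,n} and every two strong Nash equilibria s and s' of G, the costs coincide: h_j^s = h_j^{s'}. -/

import Mathlib

open scoped NNReal

namespace IDG

/-- A consumption profile in an `n`-resource/`k`-player-type resource selection
game with I.D.-dependent weighting: each player type `i` distributes its unit
mass among the resources in its allowed set `R i`. -/
def IsProfile (n k : ℕ) (R : Fin k → Finset (Fin n)) (s : Fin k → Fin n → ℝ≥0) : Prop :=
  (∀ i : Fin k, ∀ j : Fin n, j ∉ R i → s i j = 0) ∧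
  (∀ i : Fin k, ∑ j ∈ R i, s i j = 1)

/-- The weighted load on resource `j`, where `w i j` is the weighting function
of player type `i` on resource `j`. -/
def load (n k : ℕ) (R : Fin k → Finset (Fin n)) (w : Fin k → Fin n → ℝ≥0 → ℝ≥0)
    (s : Fin k → Fin n → ℝ≥0) (j : Fin n) : ℝ≥0 :=
  ∑ i ∈ Finset.univ.filter (fun i : Fin k => j ∈ R i), w i j (s i j)

/-- The cost of resource `j`. -/
def cost (n k : ℕ) (f : Fin n → ℝ≥0 → ℝ) (R : Fin k → Finset (Fin n))
    (w : Fin k → Fin n → ℝ≥0 → ℝ≥0) (s : Fin k → Fin n → ℝ≥0) (j : Fin n) : ℝ :=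
  f j (load n k R w s j)

/-- A Nash equilibrium. -/
def IsNash (n k : ℕ) (f : Fin n → ℝ≥0 → ℝ) (R : Fin k → Finset (Fin n))
    (w : Fin k → Fin n → ℝ≥0 → ℝ≥0) (s : Fin k → Fin n → ℝ≥0) : Prop :=
  IsProfile n k R s ∧
  ∀ i : Fin k, ∀ l : Fin n, 0 < s i l → ∀ j ∈ R i,
    cost n k f R w s l ≤ cost n k f R w s j

/-- A strong Nash equilibrium: a Nash equilibrium `s` such that there is no
consumption profile `s' ≠ s` in which every player type that strictly increases
its consumption of some resource `m` (i.e. `s' i m > s i m`) pays, at `m` in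
`s'`, strictly less than the common equilibrium cost `h^i` of its type
(expressed via: less than `cost s l` for every `l` in the support of `s i`). -/
def IsStrong (n k : ℕ) (f : Fin n → ℝ≥0 → ℝ) (R : Fin k → Finset (Fin n))
    (w : Fin k → Fin n → ℝ≥0 → ℝ≥0) (s : Fin k → Fin n → ℝ≥0) : Prop :=
  IsNash n k f R w s ∧
  ¬ ∃ s' : Fin k → Fin n → ℝ≥0, IsProfile n k R s' ∧ s' ≠ s ∧
    ∀ i : Fin k, ∀ m : Fin n, s i m < s' i m →
      ∀ l : Fin n, 0 < s i l → cost n k f R w s' m < cost n k f R w s l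

end IDG

open IDG

namespace IDGAux

variable {n k : ℕ} {f : Fin n → ℝ≥0 → ℝ} {R : Fin k → Finset (Fin n)}
  {w : Fin k → Fin n → ℝ≥0 → ℝ≥0} {s s' : Fin k → Fin n → ℝ≥0}

lemma mem_of_pos (hp : IsProfile n k R s) {i : Fin k} {j : Fin n} (h : 0 < s i j) :
    j ∈ R i := by
  by_contra hj
  rw [hp.1 i j hj] at h
  exact lt_irrefl 0 h

lemma le_one (hp : IsProfile n k R s) (i : Fin k) (j : Fin n) : s i j ≤ 1 := by
  by_cases hj : j ∈ R i
  · calc s i j ≤ ∑ j' ∈ R i, s i j' :=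
        Finset.single_le_sum (fun _ _ => zero_le) hj
      _ = 1 := hp.2 i
  · rw [hp.1 i j hj]; exact zero_le

lemma exists_pos (hp : IsProfile n k R s) (i : Fin k) : ∃ l, 0 < s i l := by
  have h1 : (∑ j ∈ R i, s i j) ≠ 0 := by rw [hp.2 i]; exact one_ne_zero
  obtain ⟨l, _, hl⟩ := Finset.exists_ne_zero_of_sum_ne_zero h1
  exact ⟨l, lt_of_le_of_ne (zero_le) (Ne.symm hl)⟩

lemma supp_cost_eq (hN : IsNash n k f R w s) {i : Fin k} {l l' : Fin n}
    (hl : 0 < s i l) (hl' : 0 < s i l') :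
    cost n k f R w s l = cost n k f R w s l' :=
  le_antisymm (hN.2 i l hl l' (mem_of_pos hN.1 hl'))
    (hN.2 i l' hl' l (mem_of_pos hN.1 hl))

/-- Key lemma: if both `s` and `s'` are strong equilibria and player type `i`
plays differently in them, then the common equilibrium cost of type `i` in `s`
is at most the one in `s'`. -/
lemma key (hmono : ∀ j, Monotone (f j))
    (hw : ∀ i : Fin k, ∀ j ∈ R i, StrictMonoOn (w i j) (Set.Iic 1))
    (hs : IsStrong n k f R w s) (hs' : IsStrong n k f R w s')
    {i : Fin k} (hne : s i ≠ s' i) {l l' : Fin n}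
    (hl : 0 < s i l) (hl' : 0 < s' i l') :
    cost n k f R w s l ≤ cost n k f R w s' l' := by
  classical
  choose ls hls using fun i => exists_pos hs.1.1 i
  choose ls' hls' using fun i => exists_pos hs'.1.1 i
  set hi : Fin k → ℝ := fun i => cost n k f R w s (ls i) with hhi
  set gi : Fin k → ℝ := fun i => cost n k f R w s' (ls' i) with hgi
  have hBempty : ∀ i₀ : Fin k, s i₀ ≠ s' i₀ → hi i₀ ≤ gi i₀ := by
    by_contra hcon
    push_neg at hcon
    obtain ⟨i₀, hne₀, hlt₀⟩ := hcon
    set P : Fin k → Prop := fun i₂ => s i₂ ≠ s' i₂ ∧ gi i₂ < hi i₂ with hP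
    have hPi₀ : P i₀ := ⟨hne₀, hlt₀⟩
    set t : Fin k → Fin n → ℝ≥0 := fun i₂ => if P i₂ then s' i₂ else s i₂ with ht
    have hprof : IsProfile n k R t := by
      constructor
      · intro i₂ j hj
        by_cases h : P i₂
        · show (if P i₂ then s' i₂ else s i₂) j = 0
          rw [if_pos h]; exact hs'.1.1.1 i₂ j hj
        · show (if P i₂ then s' i₂ else s i₂) j = 0
          rw [if_neg h]; exact hs.1.1.1 i₂ j hj
      · intro i₂
        by_cases h : P i₂
        · show (∑ j ∈ R i₂, (if P i₂ then s' i₂ else s i₂) j) = 1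
          rw [if_pos h]; exact hs'.1.1.2 i₂
        · show (∑ j ∈ R i₂, (if P i₂ then s' i₂ else s i₂) j) = 1
          rw [if_neg h]; exact hs.1.1.2 i₂
    have htne : t ≠ s := by
      intro h
      apply hPi₀.1
      have h0 := congrFun h i₀
      have h1 : t i₀ = s' i₀ := by simp only [ht]; exact if_pos hPi₀
      rw [h1] at h0
      exact h0.symm
    have himp : ¬ ∀ i₂ : Fin k, ∀ m : Fin n, s i₂ m < t i₂ m →
        ∀ l₂ : Fin n, 0 < s i₂ l₂ → cost n k f R w t m < cost n k f R w s l₂ :=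
      fun himp => hs.2 ⟨t, hprof, htne, himp⟩
    push_neg at himp
    obtain ⟨i₂, m, hm_lt, l₂, hl₂, hcost₂⟩ := himp
    have hPi₂ : P i₂ := by
      by_contra h
      have h1 : t i₂ = s i₂ := by simp only [ht]; exact if_neg h
      rw [h1] at hm_lt
      exact lt_irrefl _ hm_lt
    have ht₂ : t i₂ = s' i₂ := by simp only [ht]; exact if_pos hPi₂
    have hm_lt' : s i₂ m < s' i₂ m := by rwa [ht₂] at hm_lt
    have hmpos' : 0 < s' i₂ m := lt_of_le_of_lt (zero_le) hm_lt'
    have hmR₂ : m ∈ R i₂ := mem_of_pos hs'.1.1 hmpos'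
    have hgm : cost n k f R w s' m = gi i₂ := supp_cost_eq hs'.1 hmpos' (hls' i₂)
    have hhl₂ : cost n k f R w s l₂ = hi i₂ := supp_cost_eq hs.1 hl₂ (hls i₂)
    have hcostm : cost n k f R w s' m < cost n k f R w t m := by
      calc cost n k f R w s' m = gi i₂ := hgm
        _ < hi i₂ := hPi₂.2
        _ = cost n k f R w s l₂ := hhl₂.symm
        _ ≤ cost n k f R w t m := hcost₂
    have hload : load n k R w s' m < load n k R w t m := by
      by_contra hle
      push_neg at hle
      exact absurd hcostm (not_lt.2 (hmono m hle))
    have hex : ∃ i₁ ∈ Finset.univ.filter (fun i₁ : Fin k => m ∈ R i₁),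
        w i₁ m (s' i₁ m) < w i₁ m (t i₁ m) := by
      by_contra hno
      push_neg at hno
      exact absurd (Finset.sum_le_sum fun i₁ h₁ => hno i₁ h₁) (not_le.2 hload)
    obtain ⟨i₁, h₁mem, h₁w⟩ := hex
    have hmR₁ : m ∈ R i₁ := (Finset.mem_filter.1 h₁mem).2
    have hnP₁ : ¬ P i₁ := by
      intro h
      have h1 : t i₁ = s' i₁ := by simp only [ht]; exact if_pos h
      rw [h1] at h₁w
      exact lt_irrefl _ h₁w
    have ht₁ : t i₁ = s i₁ := by simp only [ht]; exact if_neg hnP₁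
    rw [ht₁] at h₁w
    have h₁lt : s' i₁ m < s i₁ m := by
      by_contra hge
      push_neg at hge
      exact absurd ((hw i₁ m hmR₁).monotoneOn (Set.mem_Iic.2 (le_one hs.1.1 i₁ m))
        (Set.mem_Iic.2 (le_one hs'.1.1 i₁ m)) hge) (not_le.2 h₁w)
    have h₁pos : 0 < s i₁ m := lt_of_le_of_lt (zero_le) h₁lt
    have hne₁ : s i₁ ≠ s' i₁ := fun hh => (ne_of_gt h₁lt) (congrFun hh m)
    have h₁ : hi i₁ ≤ gi i₁ := not_lt.1 (fun hlt => hnP₁ ⟨hne₁, hlt⟩)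
    have hcm : cost n k f R w s m = hi i₁ := supp_cost_eq hs.1 h₁pos (hls i₁)
    have hg₁ : gi i₁ ≤ cost n k f R w s' m := hs'.1.2 i₁ (ls' i₁) (hls' i₁) m hmR₁
    have hh₂ : hi i₂ ≤ cost n k f R w s m := hs.1.2 i₂ (ls i₂) (hls i₂) m hmR₂
    have hfalse : cost n k f R w s' m < cost n k f R w s' m := by
      calc cost n k f R w s' m = gi i₂ := hgm
        _ < hi i₂ := hPi₂.2
        _ ≤ cost n k f R w s m := hh₂
        _ = hi i₁ := hcm
        _ ≤ gi i₁ := h₁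
        _ ≤ cost n k f R w s' m := hg₁
    exact lt_irrefl _ hfalse
  calc cost n k f R w s l = hi i := supp_cost_eq hs.1 hl (hls i)
    _ ≤ gi i := hBempty i hne
    _ = cost n k f R w s' l' := supp_cost_eq hs'.1 (hls' i) hl'

lemma not_cost_lt (hmono : ∀ j, Monotone (f j))
    (hw : ∀ i : Fin k, ∀ j ∈ R i, StrictMonoOn (w i j) (Set.Iic 1))
    (hs : IsStrong n k f R w s) (hs' : IsStrong n k f R w s') (j : Fin n) :
    ¬ cost n k f R w s j < cost n k f R w s' j := by
  intro h
  have hload : load n k R w s j < load n k R w s' j := by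
    by_contra hle
    push_neg at hle
    exact absurd h (not_lt.2 (hmono j hle))
  have hex : ∃ i₁ ∈ Finset.univ.filter (fun i₁ : Fin k => j ∈ R i₁),
      w i₁ j (s i₁ j) < w i₁ j (s' i₁ j) := by
    by_contra hno
    push_neg at hno
    exact absurd (Finset.sum_le_sum fun i₁ h₁ => hno i₁ h₁) (not_le.2 hload)
  obtain ⟨i₁, h₁mem, h₁w⟩ := hex
  have hjR : j ∈ R i₁ := (Finset.mem_filter.1 h₁mem).2
  have h₁lt : s i₁ j < s' i₁ j := by
    by_contra hge
    push_neg at hge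
    exact absurd ((hw i₁ j hjR).monotoneOn (Set.mem_Iic.2 (le_one hs'.1.1 i₁ j))
      (Set.mem_Iic.2 (le_one hs.1.1 i₁ j)) hge) (not_le.2 h₁w)
  have hpos' : 0 < s' i₁ j := lt_of_le_of_lt (zero_le) h₁lt
  have hne : s i₁ ≠ s' i₁ := fun hh => (ne_of_lt h₁lt) (congrFun hh j)
  obtain ⟨l, hl⟩ := exists_pos hs.1.1 i₁
  have h1 : cost n k f R w s l ≤ cost n k f R w s' j := key hmono hw hs hs' hne hl hpos'
  have h2 : cost n k f R w s' j ≤ cost n k f R w s l := key hmono hw hs' hs (Ne.symm hne) hpos' hl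
  have h3 : cost n k f R w s l ≤ cost n k f R w s j := hs.1.2 i₁ l hl j hjR
  linarith

end IDGAux

/-- In every resource selection game with I.D.-dependent
weighting (nondecreasing, not necessarily continuous, cost functions; strictly
increasing weighting functions on `[0,1]`), the cost of each resource is the
same in all strong Nash equilibria. -/
theorem strong_cost_unique_id (n k : ℕ)
    (f : Fin n → ℝ≥0 → ℝ) (R : Fin k → Finset (Fin n))
    (w : Fin k → Fin n → ℝ≥0 → ℝ≥0)
    (hR : ∀ i, (R i).Nonempty)
    (hmono : ∀ j, Monotone (f j))
    (hw : ∀ i : Fin k, ∀ j ∈ R i, StrictMonoOn (w i j) (Set.Iic 1))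
    (s s' : Fin k → Fin n → ℝ≥0)
    (hs : IsStrong n k f R w s) (hs' : IsStrong n k f R w s') (j : Fin n) :
    cost n k f R w s j = cost n k f R w s' j :=
  le_antisymm (not_lt.1 (IDGAux.not_cost_lt hmono hw hs' hs j))
    (not_lt.1 (IDGAux.not_cost_lt hmono hw hs hs' j))
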